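/- For a deck of 2^k cards, writing a position i in binary as x_{k-1} x_{k-2} ... x_1 x_0, the left shuffle sends i to the position with binary representation x_0 x̄_{k-1} x̄_{k-2} ... x̄_2 x̄_1, where x̄ = 1 - x. -/

import Mathlib

/-- Bits of the complement `2^m - 1 - q` are the complements of the bits of `q`. -/
lemma bits_compl (m q j : ℕ) (hq : q < 2 ^ m) (hj : j < m) :
    Nat.testBit (2 ^ m - 1 - q) j = !Nat.testBit q j := by
  have hpj : 0 < 2 ^ j := Nat.two_pow_pos j
  set a := q / 2 ^ j with ha'
  set e := q % 2 ^ j with he'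
  have he : e < 2 ^ j := Nat.mod_lt _ hpj
  have hqd : 2 ^ j * a + e = q := Nat.div_add_mod q (2 ^ j)
  have hm : 2 ^ m = 2 ^ j * 2 ^ (m - j) := by
    rw [← pow_add]; congr 1; omega
  have hA : 0 < 2 ^ (m - j) := Nat.two_pow_pos _
  have ha : a < 2 ^ (m - j) := by
    exact Nat.div_lt_of_lt_mul (by rw [← hm]; exact hq)
  have key : 2 ^ m - 1 - q = 2 ^ j * (2 ^ (m - j) - 1 - a) + (2 ^ j - 1 - e) := by
    have hq1 : q ≤ 2 ^ m - 1 := by omega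
    have ha1 : a ≤ 2 ^ (m - j) - 1 := by omega
    have he1 : e ≤ 2 ^ j - 1 := by omega
    have hi : (q : ℤ) = 2 ^ j * a + e := by exact_mod_cast hqd.symm
    zify [hq1, ha1, he1, Nat.one_le_two_pow, hpj, hA]
    linarith [hi]
  rw [key]
  rw [Nat.testBit_eq_decide_div_mod_eq, Nat.testBit_eq_decide_div_mod_eq]
  rw [Nat.mul_add_div hpj, Nat.div_eq_of_lt (by omega), Nat.add_zero]
  have hev : 2 ∣ 2 ^ (m - j) := dvd_pow_self 2 (by omega)
  obtain ⟨B, hB⟩ := hev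
  rw [← ha']
  by_cases h : a % 2 = 1 <;> simp [h] <;> omega

/-- On a deck of `2^k` cards, the left shuffle in binary: if `i` has binary
digits `x_{k-1} … x_1 x_0` then `L i` has binary digits
`x_0 x̄_{k-1} x̄_{k-2} … x̄_1` (rotate right by one, complement all bits
except the new leading bit). -/
theorem left_shuffle_binary (k : ℕ) (hk : 1 ≤ k)
    (L : Equiv.Perm (Fin (2 ^ k)))
    (hL : ∀ i : Fin (2 ^ k), (L i : ℕ) =
      (2 ^ (k - 1) * (i : ℕ) + (2 ^ (k - 1) - 1)) % (2 ^ k + 1)) :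
    ∀ i : Fin (2 ^ k),
      Nat.testBit (L i : ℕ) (k - 1) = Nat.testBit (i : ℕ) 0 ∧
      ∀ j : ℕ, j < k - 1 →
        Nat.testBit (L i : ℕ) j = !Nat.testBit (i : ℕ) (j + 1) := by
  intro i
  have hi2 : (i : ℕ) < 2 ^ k := i.isLt
  set n := 2 ^ (k - 1) with hn
  have h2k : 2 ^ k = 2 * n := by
    rw [hn, ← pow_succ']; congr 1; omega
  set q := (i : ℕ) / 2 with hq'
  set b := (i : ℕ) % 2 with hb'
  have hb : b < 2 := Nat.mod_lt _ (by norm_num)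
  have hqd : 2 * q + b = (i : ℕ) := Nat.div_add_mod _ 2
  have hqlt : q < n := by omega
  have hnpos : 0 < n := Nat.two_pow_pos _
  -- the value of L i
  have hval : (L i : ℕ) = n * b + n - 1 - q := by
    rw [hL i]
    have heq : n * (i : ℕ) + (n - 1) = (2 ^ k + 1) * q + (n * b + n - 1 - q) := by
      have hiZ : ((i : ℕ) : ℤ) = 2 * q + b := by exact_mod_cast hqd.symm
      have h1 : q ≤ n * b + n - 1 := by omega
      have h2 : 1 ≤ n * b + n := by omega
      zify [h1, h2, hnpos, h2k]
      linear_combination (n : ℤ) * hiZ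
    rw [heq, Nat.mul_add_mod]
    apply Nat.mod_eq_of_lt
    have : n * b ≤ n * 1 := Nat.mul_le_mul_left n (by omega)
    omega
  rw [hval]
  rcases (by omega : b = 0 ∨ b = 1) with h0 | h1
  · -- b = 0 : value is 2^(k-1) - 1 - q
    rw [h0, Nat.mul_zero, Nat.zero_add, hn]
    constructor
    · rw [Nat.testBit_lt_two_pow (by omega), Nat.testBit_zero]
      simp [← hb', h0]
    · intro j hj
      rw [show (2 : ℕ) ^ (k - 1) - 1 - q = 2 ^ (k - 1) - 1 - q from rfl,
        bits_compl (k - 1) q j hqlt hj, ← Nat.testBit_div_two, ← hq']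
  · -- b = 1 : value is 2^k - 1 - q
    have hval2 : n * b + n - 1 - q = 2 ^ k - 1 - q := by rw [h1]; omega
    rw [hval2]
    have hq2 : q < 2 ^ k := by omega
    constructor
    · rw [bits_compl k q (k - 1) hq2 (by omega),
        Nat.testBit_lt_two_pow (x := q) (by rw [← hn] at *; omega), Nat.testBit_zero]
      simp [← hb', h1]
    · intro j hj
      rw [bits_compl k q j hq2 (by omega), ← Nat.testBit_div_two, ← hq']
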